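/- The group of units of the monoid of n×n column-stochastic matrices (under matrix multiplication) consists exactly of the n×n permutation matrices. That is, A ∈ s(n) has an inverse that is also in s(n) if and only if A is a permutation matrix. -/

import Mathlib

open Matrix

def IsStochastic {n : ℕ} (A : Matrix (Fin n) (Fin n) ℝ) : Prop :=
  (∀ i j, 0 ≤ A i j) ∧ ∀ j, ∑ i, A i j = 1

def IsPermMatrix {n : ℕ} (A : Matrix (Fin n) (Fin n) ℝ) : Prop :=
  ∃ σ : Equiv.Perm (Fin n), ∀ i j, A i j = if σ j = i then 1 else 0

theorem units_of_stochastic_are_permutations {n : ℕ} (A : Matrix (Fin n) (Fin n) ℝ)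
    (hA : IsStochastic A) :
    (∃ B : Matrix (Fin n) (Fin n) ℝ, IsStochastic B ∧ A * B = 1 ∧ B * A = 1) ↔
      IsPermMatrix A := by
  obtain ⟨hAnn, hAsum⟩ := hA
  constructor
  · rintro ⟨B, ⟨hBnn, hBsum⟩, hAB, hBA⟩
    -- if B m j > 0 then column m of A is zero off row j
    have key : ∀ j m, 0 < B m j → ∀ k, k ≠ j → A k m = 0 := by
      intro j m hB k hk
      have h0 : ∑ l, A k l * B l j = 0 := by
        have := congrFun (congrFun hAB k) j
        simpa [Matrix.mul_apply, Matrix.one_apply, hk] using this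
      have := (Finset.sum_eq_zero_iff_of_nonneg
        (fun l _ => mul_nonneg (hAnn k l) (hBnn l j))).mp h0 m (Finset.mem_univ m)
      exact (mul_eq_zero.mp this).resolve_right (ne_of_gt hB)
    have keyone : ∀ j m, 0 < B m j → A j m = 1 := by
      intro j m hB
      have h1 : ∑ k, A k m = A j m :=
        Finset.sum_eq_single j (fun k _ hk => key j m hB k hk)
          (fun h => absurd (Finset.mem_univ j) h)
      rw [← h1, hAsum m]
    have hex : ∀ j, ∃ m, 0 < B m j := by
      intro j
      by_contra h
      push_neg at h
      have : (1 : ℝ) = 0 := by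
        rw [← hBsum j]
        exact Finset.sum_eq_zero fun m _ => le_antisymm (h m) (hBnn m j)
      norm_num at this
    set g : Fin n → Fin n := fun j => Classical.choose (hex j) with hg
    have hgpos : ∀ j, 0 < B (g j) j := fun j => Classical.choose_spec (hex j)
    have hginj : Function.Injective g := by
      intro j j' he
      by_contra hne
      have h1 : A j (g j) = 1 := keyone j (g j) (hgpos j)
      have h0 : A j (g j') = 0 := key j' (g j') (hgpos j') j hne
      rw [← he, h1] at h0
      norm_num at h0
    have hgbij : Function.Bijective g := Finite.injective_iff_bijective.mp hginj
    set σ0 : Equiv.Perm (Fin n) := Equiv.ofBijective g hgbij with hσ0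
    refine ⟨σ0.symm, ?_⟩
    intro i j
    have hgs : g (σ0.symm j) = j := σ0.apply_symm_apply j
    by_cases h : σ0.symm j = i
    · rw [if_pos h]
      have h1 := keyone (σ0.symm j) (g (σ0.symm j)) (hgpos _)
      rwa [hgs, h] at h1
    · rw [if_neg h]
      have h0 := key (σ0.symm j) (g (σ0.symm j)) (hgpos _) i (fun hc => h hc.symm)
      rwa [hgs] at h0
  · rintro ⟨σ, hσ⟩
    refine ⟨fun i j => if σ.symm j = i then 1 else 0, ⟨fun i j => by positivity, fun j => by
      simp⟩, ?_, ?_⟩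
    · ext i j
      show ∑ k, A i k * (if σ.symm j = k then (1:ℝ) else 0) = (1 : Matrix (Fin n) (Fin n) ℝ) i j
      simp only [hσ, Matrix.one_apply, ite_mul, mul_ite, one_mul, mul_one, zero_mul, mul_zero]
      simp [Finset.sum_ite_eq', eq_comm]
    · ext i j
      show ∑ k, (if σ.symm k = i then (1:ℝ) else 0) * A k j = (1 : Matrix (Fin n) (Fin n) ℝ) i j
      simp only [hσ, Matrix.one_apply, ite_mul, mul_ite, one_mul, mul_one, zero_mul, mul_zero]
      simp [Finset.sum_ite_eq', Finset.sum_ite_eq, Equiv.symm_apply_eq, eq_comm]
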